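/- arXiv:2308.13513 — 2 statements merged into one kernel-verified Lean document; each statement's English description precedes it below -/
import Mathlib

section
/- Let n, p, q, k, μ be real numbers with n > 0, p > 0, q > 0, k > 0 and μ ≠ 0. Define PL = (k/2)·μ², PL' = (k/2)·μ² · n(p+q)(np − nq + 1)² / (1 + n(p+q)), ΔPL = PL' − PL, and structural bias B = (p − q)/(p + q). If B > ( √(n²(p+q)² + n(p+q)) − n(p+q) ) / ( n²(p+q)² ), then ΔPL > 0. -/
/-- Proposition 1(1): if the structural bias `B = (p−q)/(p+q)` exceeds the
threshold `(√(n²(p+q)²+n(p+q)) − n(p+q))/(n²(p+q)²)`, then the change in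
privacy leakage after one GCN-like message passing step is positive. -/
theorem privacy_leakage_amplified_of_bias_gt_threshold
    (n p q k μ : ℝ) (hn : 0 < n) (hp : 0 < p) (hq : 0 < q) (hk : 0 < k)
    (hμ : μ ≠ 0)
    (PL PL' ΔPL B : ℝ)
    (hPL : PL = (k / 2) * μ ^ 2)
    (hPL' : PL' = (k / 2) * μ ^ 2 *
        (n * (p + q) * (n * p - n * q + 1) ^ 2 / (1 + n * (p + q))))
    (hΔ : ΔPL = PL' - PL)
    (hB : B = (p - q) / (p + q))
    (hgt : B > (Real.sqrt (n ^ 2 * (p + q) ^ 2 + n * (p + q)) - n * (p + q)) /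
        (n ^ 2 * (p + q) ^ 2)) :
    ΔPL > 0 := by
  have hpq : 0 < p + q := by linarith
  have hs : 0 < n * (p + q) := by positivity
  set s := n * (p + q) with hsdef
  set r := Real.sqrt (n ^ 2 * (p + q) ^ 2 + n * (p + q)) with hrdef
  have hr0 : 0 ≤ r := Real.sqrt_nonneg _
  have hr2 : r ^ 2 = s ^ 2 + s := by
    rw [hrdef, sq, Real.mul_self_sqrt (by nlinarith)]
    ring
  set X := n * p - n * q + 1 with hXdef
  -- from hgt, cross-multiplying
  have hs2 : (0:ℝ) < n ^ 2 * (p + q) ^ 2 := by positivity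
  have h1 : (r - s) * (p + q) < (p - q) * (n ^ 2 * (p + q) ^ 2) := by
    rw [hB] at hgt
    have := (div_lt_div_iff₀ hs2 hpq).mp hgt
    linarith
  have h2 : r < s * X := by
    rw [← mul_lt_mul_iff_left₀ hpq]
    have he : s * X * (p + q) = (p - q) * (n ^ 2 * (p + q) ^ 2) + s * (p + q) := by
      rw [hsdef, hXdef]; ring
    nlinarith [h1]
  have h3 : s * X ^ 2 > 1 + s := by nlinarith [mul_self_nonneg r, sq_nonneg (s * X - r)]
  have hc : 0 < (k / 2) * μ ^ 2 := by positivity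
  have h4 : s * X ^ 2 / (1 + s) > 1 := by
    rw [gt_iff_lt, lt_div_iff₀ (by linarith)]
    linarith
  rw [hΔ, hPL', hPL]
  calc (0:ℝ) = (k / 2) * μ ^ 2 * 1 - (k / 2) * μ ^ 2 := by ring
    _ < (k / 2) * μ ^ 2 * (s * X ^ 2 / (1 + s)) - (k / 2) * μ ^ 2 := by
        have := mul_lt_mul_of_pos_left h4 hc
        linarith
end

section
/- Let n, p, q, k, μ be real numbers with n > 0, p > 0, q > 0, p ≥ q, k > 0 and μ ≠ 0. Define PL = (k/2)·μ², PL' = (k/2)·μ² · n(p+q)(np − nq + 1)² / (1 + n(p+q)), ΔPL = PL' − PL, and B = (p − q)/(p + q). Then ΔPL > 0 if and only if B > ( √(n²(p+q)² + n(p+q)) − n(p+q) ) / ( n²(p+q)² ). -/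
/-- Two-sided form of Proposition 1(1): `ΔPL > 0` iff the structural bias `B`
exceeds the threshold `(√(n²(p+q)²+n(p+q)) − n(p+q))/(n²(p+q)²)`. -/
theorem deltaPL_pos_iff_bias_gt_threshold
    (n p q k μ : ℝ) (hn : 0 < n) (hp : 0 < p) (hq : 0 < q) (hpq : q ≤ p)
    (hk : 0 < k) (hμ : μ ≠ 0)
    (PL PL' ΔPL B : ℝ)
    (hPL : PL = (k / 2) * μ ^ 2)
    (hPL' : PL' = (k / 2) * μ ^ 2 *
        (n * (p + q) * (n * p - n * q + 1) ^ 2 / (1 + n * (p + q))))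
    (hΔ : ΔPL = PL' - PL)
    (hB : B = (p - q) / (p + q)) :
    ΔPL > 0 ↔
      B > (Real.sqrt (n ^ 2 * (p + q) ^ 2 + n * (p + q)) - n * (p + q)) /
        (n ^ 2 * (p + q) ^ 2) := by
  subst hPL hPL' hΔ hB
  set s := n * (p + q) with hs
  set d := n * p - n * q with hd
  have hs0 : 0 < s := by positivity
  have hd0 : 0 ≤ d := by nlinarith
  have hC : 0 < k / 2 * μ ^ 2 := by positivity
  have h1s : 0 < 1 + s := by linarith
  have hLHS : (k / 2 * μ ^ 2 * (s * (d + 1) ^ 2 / (1 + s)) - k / 2 * μ ^ 2 > 0)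
      ↔ 0 < s * d ^ 2 + 2 * s * d - 1 := by
    rw [gt_iff_lt, sub_pos, lt_mul_iff_one_lt_right hC, lt_div_iff₀ h1s, one_mul]
    constructor <;> intro h <;> nlinarith
  have hsq : n ^ 2 * (p + q) ^ 2 = s ^ 2 := by ring
  have hBd : (p - q) / (p + q) = d / s := by
    rw [hd, hs]
    rw [show n * p - n * q = n * (p - q) by ring, mul_div_mul_left _ _ (ne_of_gt hn)]
  have hpos : 0 < d * s + s := by positivity
  have hRHS : ((Real.sqrt (s ^ 2 + s) - s) / s ^ 2 < d / s)
      ↔ 0 < s * d ^ 2 + 2 * s * d - 1 := by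
    rw [div_lt_iff₀ (by positivity : (0:ℝ) < s ^ 2), sub_lt_iff_lt_add,
      show d / s * s ^ 2 + s = d * s + s by field_simp,
      Real.sqrt_lt' hpos]
    constructor <;> intro h <;> nlinarith
  rw [hsq, hBd]
  exact hLHS.trans hRHS.symm
end
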